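/- arXiv:1010.0429 — 2 statements merged into one kernel-verified Lean document; each statement's English description precedes it below -/
import Mathlib

section
/- For a rational number a and any integer k ≥ 0, the number μ_a^k · (a)_k / k! is an integer, where μ_a^k = (den a)^k · Π_{p | den a} p^{⌊k/(p-1)⌋} with the product over primes p dividing the denominator of a. -/
/-- `μ_a^k = (den a)^k · ∏_{p | den a} p^(⌊k/(p-1)⌋)`, product over primes dividing `den a`. -/
def mu (a : ℚ) (k : ℕ) : ℕ :=
  a.den ^ k * ∏ p ∈ a.den.primeFactors, p ^ (k / (p - 1))

/-- Pochhammer symbol `(a)_k = a(a+1)⋯(a+k-1)` for rational `a`. -/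
def pochQ (a : ℚ) (k : ℕ) : ℚ := ∏ j ∈ Finset.range k, (a + j)

open Finset

lemma ascPoch_eval (E : ℤ) (k : ℕ) :
    (ascPochhammer ℤ k).eval E = ∏ j ∈ range k, (E + j) := by
  induction k with
  | zero => simp
  | succ n ih =>
      rw [ascPochhammer_succ_right, prod_range_succ, Polynomial.eval_mul, ih]
      simp

lemma factorial_dvd_prod_consec (E : ℤ) (k : ℕ) :
    (k.factorial : ℤ) ∣ ∏ j ∈ range k, (E + j) := by
  have h := Ring.factorial_nsmul_multichoose_eq_ascPochhammer E k
  rw [Polynomial.ascPochhammer_smeval_eq_eval, ascPoch_eval] at h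
  exact ⟨Ring.multichoose E k, by rw [← h, nsmul_eq_mul]⟩

lemma key_dvd (d : ℕ) (n : ℤ) (q : ℕ) (hq : q.Prime) (hqd : ¬ q ∣ d) (k : ℕ) :
    (q : ℤ) ^ ((k.factorial).factorization q) ∣ ∏ j ∈ range k, (n + j * d) := by
  set N := (k.factorial).factorization q with hN
  haveI : NeZero (q ^ N) := ⟨pow_ne_zero _ hq.pos.ne'⟩
  have hcop : Nat.Coprime d (q ^ N) :=
    (Nat.Coprime.pow_left N (hq.coprime_iff_not_dvd.mpr hqd)).symm
  set R := ZMod (q ^ N)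
  set u : Rˣ := ZMod.unitOfCoprime d hcop with hu
  obtain ⟨E, hE⟩ := ZMod.intCast_surjective (((u⁻¹ : Rˣ) : R) * (n : R))
  have hqN : ((q : ℤ) ^ N) ∣ ∏ j ∈ range k, (E + j) :=
    dvd_trans (by exact_mod_cast Int.natCast_dvd_natCast.mpr (Nat.ordProj_dvd _ q))
      (factorial_dvd_prod_consec E k)
  rw [← Int.natCast_pow, ← ZMod.intCast_zmod_eq_zero_iff_dvd] at hqN
  push_cast at hqN
  have hud : (u : R) = (d : R) := ZMod.coe_unitOfCoprime d hcop
  have key : ((∏ j ∈ range k, (n + j * d) : ℤ) : R) = (u : R) ^ k * ∏ j ∈ range k, ((E : R) + j) := by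
    push_cast
    have step : ∏ j ∈ range k, ((n : R) + (j : R) * (d : R))
        = ∏ j ∈ range k, ((u : R) * ((E : R) + (j : R))) := by
      refine prod_congr rfl fun j _ => ?_
      rw [mul_add, hE, ← mul_assoc, Units.mul_inv, one_mul, hud]
      ring
    refine Eq.trans (prod_congr rfl fun j _ => ?_) (step.trans ?_)
    · congr 1
      rw [Int.cast_mul]; simp
    · rw [prod_mul_distrib, prod_const, card_range]
  rw [← Int.natCast_pow, ← ZMod.intCast_zmod_eq_zero_iff_dvd, key, hqN, mul_zero]

lemma fact_factorization_le (q k : ℕ) (hq : q.Prime) :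
    (k.factorial).factorization q ≤ k / (q - 1) := by
  haveI := Fact.mk hq
  rw [Nat.factorization_def _ hq, Nat.le_div_iff_mul_le (Nat.sub_pos_of_lt hq.one_lt)]
  have h := sub_one_mul_padicValNat_factorial (p := q) k
  rw [mul_comm, h]
  exact Nat.sub_le _ _

theorem stmt_5' (a : ℚ) (k : ℕ) :
    ∃ z : ℤ, ((a.den ^ k * ∏ p ∈ a.den.primeFactors, p ^ (k / (p - 1)) : ℕ) : ℚ) *
      (∏ j ∈ Finset.range k, (a + j)) / (k.factorial : ℚ) = z := by
  set d := a.den with hd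
  have hd0 : d ≠ 0 := a.den_nz
  set M : ℕ := ∏ p ∈ d.primeFactors, p ^ (k / (p - 1)) with hM
  have hM0 : M ≠ 0 := Finset.prod_ne_zero_iff.mpr fun p hp =>
    pow_ne_zero _ (Nat.prime_of_mem_primeFactors hp).pos.ne'
  set P : ℤ := ∏ j ∈ range k, (a.num + j * d) with hP
  have hdvd : (k.factorial : ℤ) ∣ (M : ℤ) * P := by
    by_cases hP0 : P = 0
    · simp [hP0]
    · rw [Int.natCast_dvd]
      have hMP0 : ((M : ℤ) * P).natAbs ≠ 0 := by
        simp [Int.natAbs_mul, hM0, Int.natAbs_eq_zero, hP0]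
      rw [← Nat.factorization_le_iff_dvd k.factorial_ne_zero hMP0]
      intro q
      rcases Nat.eq_zero_or_pos ((k.factorial).factorization q) with h0 | hpos
      · simp [h0]
      have hq : q.Prime := by
        by_contra h
        rw [Nat.factorization_eq_zero_of_not_prime _ h] at hpos
        exact absurd hpos (lt_irrefl 0)
      rw [← Nat.Prime.pow_dvd_iff_le_factorization hq hMP0]
      by_cases hqd : q ∣ d
      · -- q divides M with high power
        have hmem : q ∈ d.primeFactors := Nat.mem_primeFactors.mpr ⟨hq, hqd, hd0⟩
        have h1 : q ^ (k / (q - 1)) ∣ M := Finset.dvd_prod_of_mem _ hmem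
        have h2 : q ^ ((k.factorial).factorization q) ∣ q ^ (k / (q - 1)) :=
          pow_dvd_pow _ (fact_factorization_le q k hq)
        exact dvd_trans (h2.trans h1) (by rw [Int.natAbs_mul, Int.natAbs_natCast]; exact Dvd.dvd.mul_right dvd_rfl _)
      · have h1 := key_dvd d a.num q hq hqd k
        have : (q:ℤ) ^ ((k.factorial).factorization q) ∣ (M : ℤ) * P := h1.mul_left _
        rw [← Int.natAbs_dvd_natAbs, Int.natAbs_pow, Int.natAbs_natCast] at this
        exact this
  obtain ⟨z, hz⟩ := hdvd
  refine ⟨z, ?_⟩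
  have hden : ((d : ℚ)) ≠ 0 := by exact_mod_cast hd0
  have hfact : ((k.factorial : ℚ)) ≠ 0 := by exact_mod_cast k.factorial_ne_zero
  have hpoch : ∏ j ∈ Finset.range k, (a + j) = (P : ℚ) / (d : ℚ) ^ k := by
    have hterm : ∀ j ∈ Finset.range k, a + (j : ℚ) = ((a.num : ℚ) + j * d) / d := by
      intro j _
      rw [eq_div_iff hden, add_mul]
      congr 1
      rw [hd]
      exact_mod_cast Rat.mul_den_eq_num a
    rw [Finset.prod_congr rfl hterm, Finset.prod_div_distrib, Finset.prod_const,
      Finset.card_range, hP]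
    push_cast
    ring
  have hzQ : (M : ℚ) * (P : ℚ) = (k.factorial : ℚ) * z := by exact_mod_cast hz
  rw [hpoch]
  push_cast
  field_simp
  linear_combination hzQ

theorem stmt_5 (a : ℚ) (k : ℕ) :
    ∃ z : ℤ, (mu a k : ℚ) * pochQ a k / (k.factorial : ℚ) = z := by
  simpa [mu, pochQ] using stmt_5' a k
end

section
/- For real a > -1, real b > 0, and n ≥ 0: the limit as a_2 → a of (q_n(a, a_2, b) - q_n(a_2, a, b))/(a_2 - a) equals Σ_{k=0}^n b^{n-k} C(n,k)² (a+1)_{n+k} (H_{n+k}(a) + 2H_{n-k} - 2H_k), where q_n(a_1,a_2,b) = Σ_{k=0}^n C(n+a_1-a_2,k) C(n+a_2-a_1,n-k) (a_2+1)_{n+k} b^{n-k}. -/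
open Real Filter

/-- Pochhammer symbol `(a)_m` for real `a`. -/
noncomputable def pochR (a : ℝ) (m : ℕ) : ℝ := ∏ j ∈ Finset.range m, (a + j)

/-- Generalized binomial coefficient `C(x,k)` for real `x`. -/
noncomputable def gbinomR (x : ℝ) (k : ℕ) : ℝ :=
  (∏ i ∈ Finset.range k, (x - i)) / (k.factorial : ℝ)

/-- Generalized harmonic sum `H_m(a) = ∑_{j=1}^m 1/(j+a)`, with `H_m = H_m(0)`. -/
noncomputable def harmonicGen (m : ℕ) (a : ℝ) : ℝ := ∑ j ∈ Finset.range m, 1 / ((j : ℝ) + 1 + a)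

/-- `q_n(a₁,a₂,b) = ∑_{k=0}^n C(n+a₁-a₂,k) C(n+a₂-a₁,n-k) (a₂+1)_{n+k} b^{n-k}`. -/
noncomputable def qSeq (n : ℕ) (a₁ a₂ b : ℝ) : ℝ :=
  ∑ k ∈ Finset.range (n + 1),
    gbinomR ((n : ℝ) + a₁ - a₂) k * gbinomR ((n : ℝ) + a₂ - a₁) (n - k) *
      pochR (a₂ + 1) (n + k) * b ^ (n - k)

/-- Derivative of a product of linear factors. -/
lemma prodP (c : ℕ → ℝ) (x : ℝ) :
    ∀ m : ℕ, (∀ j < m, x + c j ≠ 0) →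
    HasDerivAt (fun t => ∏ j ∈ Finset.range m, (t + c j))
      ((∏ j ∈ Finset.range m, (x + c j)) * ∑ j ∈ Finset.range m, (x + c j)⁻¹) x
  | 0, _ => by simpa using hasDerivAt_const x (1 : ℝ)
  | m + 1, h => by
    have ih := prodP c x m (fun j hj => h j (hj.trans (Nat.lt_succ_self m)))
    have h2 : HasDerivAt (fun t : ℝ => t + c m) 1 x := (hasDerivAt_id x).add_const _
    have hmul := ih.mul h2
    simp only [Finset.prod_range_succ, Finset.sum_range_succ]
    convert hmul using 1
    any_goals rfl
    have hm := h m (Nat.lt_succ_self m)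
    field_simp

lemma prod_cast (n k : ℕ) (hk : k ≤ n) :
    ∏ i ∈ Finset.range k, ((n : ℝ) - i) = (k.factorial : ℝ) * n.choose k := by
  have h1 : ∏ i ∈ Finset.range k, ((n : ℝ) - i) = ((n.descFactorial k : ℕ) : ℝ) := by
    rw [Nat.descFactorial_eq_prod_range, Nat.cast_prod]
    refine Finset.prod_congr rfl fun i hi => ?_
    rw [Nat.cast_sub (le_trans (Finset.mem_range.mp hi).le hk)]
  rw [h1, Nat.descFactorial_eq_factorial_mul_choose]
  push_cast
  ring

lemma gb_val (n k : ℕ) (hk : k ≤ n) : gbinomR (n : ℝ) k = n.choose k := by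
  unfold gbinomR
  rw [prod_cast n k hk]
  field_simp

lemma gb_slope (n k : ℕ) (hk : k ≤ n) :
    HasDerivAt (fun u : ℝ => gbinomR u k)
      ((n.choose k : ℝ) * ∑ i ∈ Finset.range k, ((n : ℝ) - i)⁻¹) (n : ℝ) := by
  have hne : ∀ j < k, (n : ℝ) + (-(j : ℝ)) ≠ 0 := by
    intro j hj
    have : (j : ℝ) < (n : ℝ) := by exact_mod_cast lt_of_lt_of_le hj hk
    intro hc; linarith
  have h := (prodP (fun j => -(j : ℝ)) (n : ℝ) k hne).div_const (k.factorial : ℝ)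
  have hfun : (fun u : ℝ => (∏ j ∈ Finset.range k, (u + -(j : ℝ))) / (k.factorial : ℝ))
      = fun u : ℝ => gbinomR u k := by
    funext u
    simp [gbinomR, sub_eq_add_neg]
  have hprod : ∏ j ∈ Finset.range k, ((n : ℝ) + -(j : ℝ))
      = (k.factorial : ℝ) * n.choose k := by
    rw [← prod_cast n k hk]
    exact Finset.prod_congr rfl fun i _ => by ring
  have hsum : ∑ j ∈ Finset.range k, ((n : ℝ) + -(j : ℝ))⁻¹
      = ∑ i ∈ Finset.range k, ((n : ℝ) - i)⁻¹ := by
    exact Finset.sum_congr rfl fun i _ => by ring_nf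
  rw [hfun, hprod, hsum] at h
  have hfac : (k.factorial : ℝ) ≠ 0 := Nat.cast_ne_zero.mpr k.factorial_ne_zero
  convert h using 1
  any_goals rfl
  field_simp

lemma sum_inv_tel (n : ℕ) :
    ∀ k, k ≤ n → ∑ i ∈ Finset.range k, ((n : ℝ) - i)⁻¹
      = harmonicGen n 0 - harmonicGen (n - k) 0
  | 0, _ => by simp [harmonicGen]
  | k + 1, hk => by
    have ih := sum_inv_tel n k (le_of_lt (Nat.lt_of_succ_le hk))
    rw [Finset.sum_range_succ, ih]
    have hm : n - k = (n - (k + 1)) + 1 := by omega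
    have hcast : ((n - (k + 1) : ℕ) : ℝ) = (n : ℝ) - (k + 1) := by
      rw [Nat.cast_sub hk]; push_cast; ring
    have : harmonicGen (n - k) 0 = harmonicGen (n - (k + 1)) 0 + ((n : ℝ) - k)⁻¹ := by
      rw [hm]
      unfold harmonicGen
      rw [Finset.sum_range_succ, hcast]
      rw [one_div]
      congr 2
      ring
    rw [this]
    ring

lemma poch_deriv (a : ℝ) (ha : -1 < a) (m : ℕ) :
    HasDerivAt (fun t : ℝ => pochR (t + 1) m) (pochR (a + 1) m * harmonicGen m a) a := by
  have hne : ∀ j < m, a + (1 + (j : ℝ)) ≠ 0 := by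
    intro j hj
    have : (0 : ℝ) ≤ (j : ℝ) := Nat.cast_nonneg j
    intro hc; linarith
  have h := prodP (fun j => 1 + (j : ℝ)) a m hne
  have hfun : (fun t : ℝ => ∏ j ∈ Finset.range m, (t + (1 + (j : ℝ))))
      = fun t : ℝ => pochR (t + 1) m := by
    funext t
    unfold pochR
    exact Finset.prod_congr rfl fun j _ => by ring
  have hprod : ∏ j ∈ Finset.range m, (a + (1 + (j : ℝ))) = pochR (a + 1) m := by
    unfold pochR
    exact Finset.prod_congr rfl fun j _ => by ring
  have hsum : ∑ j ∈ Finset.range m, (a + (1 + (j : ℝ)))⁻¹ = harmonicGen m a := by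
    unfold harmonicGen
    refine Finset.sum_congr rfl fun j _ => ?_
    rw [one_div]
    congr 1
    ring
  rw [hfun, hprod, hsum] at h
  exact h

lemma key (a b : ℝ) (ha : -1 < a) (n k : ℕ) (hk : k ≤ n) :
    HasDerivAt (fun t : ℝ =>
      gbinomR ((n : ℝ) + a - t) k * gbinomR ((n : ℝ) + t - a) (n - k) *
        pochR (t + 1) (n + k) * b ^ (n - k)
      - gbinomR ((n : ℝ) + t - a) k * gbinomR ((n : ℝ) + a - t) (n - k) *
        pochR (a + 1) (n + k) * b ^ (n - k))
      (b ^ (n - k) * (n.choose k : ℝ) ^ 2 * pochR (a + 1) (n + k) *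
        (harmonicGen (n + k) a + 2 * harmonicGen (n - k) 0 - 2 * harmonicGen k 0)) a := by
  have hk' : n - k ≤ n := Nat.sub_le n k
  have hval : (n : ℝ) + a - a = (n : ℝ) := by ring
  have hφp : HasDerivAt (fun t : ℝ => (n : ℝ) + t - a) 1 a := by
    simpa using (((hasDerivAt_id a).const_add ((n : ℝ))).sub_const a)
  have hφm : HasDerivAt (fun t : ℝ => (n : ℝ) + a - t) (-1) a := by
    simpa using ((hasDerivAt_id a).const_sub ((n : ℝ) + a))
  -- slopes of the gbinom factors
  have hs1 := gb_slope n k hk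
  have hs2 := gb_slope n (n - k) hk'
  rw [sum_inv_tel n k hk] at hs1
  rw [sum_inv_tel n (n - k) hk', Nat.choose_symm hk, Nat.sub_sub_self hk] at hs2
  -- derivative of each factor, via composition with affine maps
  have h1 : HasDerivAt (fun t : ℝ => gbinomR ((n : ℝ) + a - t) k)
      (-((n.choose k : ℝ) * (harmonicGen n 0 - harmonicGen (n - k) 0))) a := by
    have := HasDerivAt.comp a (hval ▸ hs1) hφm
    simpa [Function.comp_def] using this
  have h2 : HasDerivAt (fun t : ℝ => gbinomR ((n : ℝ) + t - a) (n - k))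
      ((n.choose k : ℝ) * (harmonicGen n 0 - harmonicGen k 0)) a := by
    have := HasDerivAt.comp a (hval ▸ hs2) hφp
    simpa [Function.comp_def] using this
  have h1' : HasDerivAt (fun t : ℝ => gbinomR ((n : ℝ) + t - a) k)
      ((n.choose k : ℝ) * (harmonicGen n 0 - harmonicGen (n - k) 0)) a := by
    have := HasDerivAt.comp a (hval ▸ hs1) hφp
    simpa [Function.comp_def] using this
  have h2' : HasDerivAt (fun t : ℝ => gbinomR ((n : ℝ) + a - t) (n - k))
      (-((n.choose k : ℝ) * (harmonicGen n 0 - harmonicGen k 0))) a := by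
    have := HasDerivAt.comp a (hval ▸ hs2) hφm
    simpa [Function.comp_def] using this
  have h3 := poch_deriv a ha (n + k)
  have hq1 := ((h1.mul h2).mul h3).mul_const (b ^ (n - k))
  have hq2 := ((h1'.mul h2').mul_const (pochR (a + 1) (n + k))).mul_const (b ^ (n - k))
  have hder := hq1.sub hq2
  have e1 : gbinomR ((n : ℝ) + a - a) k = (n.choose k : ℝ) := by
    rw [hval]; exact gb_val n k hk
  have e2 : gbinomR ((n : ℝ) + a - a) (n - k) = (n.choose k : ℝ) := by
    rw [hval, gb_val n (n - k) hk', Nat.choose_symm hk]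
  convert hder using 1
  any_goals rfl
  simp only [e1, e2, Pi.mul_apply]
  ring

theorem stmt_16 (a b : ℝ) (ha : -1 < a) (hb : 0 < b) (n : ℕ) :
    Tendsto (fun t : ℝ => (qSeq n a t b - qSeq n t a b) / (t - a))
      (nhdsWithin a {a}ᶜ)
      (nhds (∑ k ∈ Finset.range (n + 1),
        b ^ (n - k) * (n.choose k : ℝ) ^ 2 * pochR (a + 1) (n + k) *
          (harmonicGen (n + k) a + 2 * harmonicGen (n - k) 0 - 2 * harmonicGen k 0))) := by
  have hf : HasDerivAt (fun t : ℝ => qSeq n a t b - qSeq n t a b)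
      (∑ k ∈ Finset.range (n + 1),
        b ^ (n - k) * (n.choose k : ℝ) ^ 2 * pochR (a + 1) (n + k) *
          (harmonicGen (n + k) a + 2 * harmonicGen (n - k) 0 - 2 * harmonicGen k 0)) a := by
    have hfun : (fun t : ℝ => qSeq n a t b - qSeq n t a b)
        = fun t : ℝ => ∑ k ∈ Finset.range (n + 1),
            (gbinomR ((n : ℝ) + a - t) k * gbinomR ((n : ℝ) + t - a) (n - k) *
              pochR (t + 1) (n + k) * b ^ (n - k)
            - gbinomR ((n : ℝ) + t - a) k * gbinomR ((n : ℝ) + a - t) (n - k) *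
              pochR (a + 1) (n + k) * b ^ (n - k)) := by
      funext t
      simp [qSeq, Finset.sum_sub_distrib]
    rw [hfun]
    exact HasDerivAt.fun_sum fun k hkmem =>
      key a b ha n k (Nat.lt_succ_iff.mp (Finset.mem_range.mp hkmem))
  have hslope := hasDerivAt_iff_tendsto_slope.mp hf
  have heq : (fun t : ℝ => (qSeq n a t b - qSeq n t a b) / (t - a))
      = slope (fun t : ℝ => qSeq n a t b - qSeq n t a b) a := by
    funext t
    rw [slope_def_field]
    simp
  rw [heq]
  exact hslope
end
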